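/- Let β > 0 and K > 0. Let 1 ≤ c₁ < c₂, and for i = 1, 2 let αᵢ ∈ (cᵢ/β, ∞) satisfy K + (cᵢ/β)·ln(αᵢβ/cᵢ) + cᵢ/β − αᵢ = 0. Then α₁/c₁ > α₂/c₂, and consequently (1/β)·ln(α₁β/c₁) > (1/β)·ln(α₂β/c₂). -/

import Mathlib

/-- `f θ = θ - 1 - log θ` is strictly increasing on `[1, ∞)`. -/
lemma f_strict_mono {a b : ℝ} (ha : 1 ≤ a) (hab : a < b) :
    a - 1 - Real.log a < b - 1 - Real.log b := by
  have ha0 : 0 < a := lt_of_lt_of_le one_pos ha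
  have hb0 : 0 < b := lt_trans ha0 hab
  have hx : b / a ≠ 1 := by
    intro h
    have : b = a := by field_simp at h; linarith
    linarith
  have hlog : Real.log (b / a) < b / a - 1 :=
    Real.log_lt_sub_one_of_pos (div_pos hb0 ha0) hx
  have hdiv : b / a - 1 ≤ b - a := by
    rw [div_sub_one (ne_of_gt ha0), div_le_iff₀ ha0]
    nlinarith
  have : Real.log b - Real.log a < b - a := by
    rw [← Real.log_div (ne_of_gt hb0) (ne_of_gt ha0)]
    linarith
  linarith

/-- A larger proportional cost rate `c` yields a smaller ratio `θ = α/c` and a smaller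
optimal injection size `ξ* = (1/β) ln(αβ/c)`. -/
theorem stmt_8 (β K : ℝ) (hβ : 0 < β) (hK : 0 < K)
    (c₁ c₂ α₁ α₂ : ℝ) (hc₁ : 1 ≤ c₁) (hc₁₂ : c₁ < c₂)
    (hα₁ : α₁ ∈ Set.Ioi (c₁ / β)) (hα₂ : α₂ ∈ Set.Ioi (c₂ / β))
    (h₁ : K + (c₁ / β) * Real.log (α₁ * β / c₁) + c₁ / β - α₁ = 0)
    (h₂ : K + (c₂ / β) * Real.log (α₂ * β / c₂) + c₂ / β - α₂ = 0) :
    α₂ / c₂ < α₁ / c₁ ∧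
    (1 / β) * Real.log (α₂ * β / c₂) < (1 / β) * Real.log (α₁ * β / c₁) := by
  have hc₁0 : 0 < c₁ := lt_of_lt_of_le one_pos hc₁
  have hc₂0 : 0 < c₂ := lt_trans hc₁0 hc₁₂
  rw [Set.mem_Ioi] at hα₁ hα₂
  set θ₁ := α₁ * β / c₁ with hθ₁
  set θ₂ := α₂ * β / c₂ with hθ₂
  have hθ₁1 : 1 < θ₁ := by
    rw [hθ₁, lt_div_iff₀ hc₁0]
    have := (div_lt_iff₀ hβ).mp hα₁
    linarith [(div_lt_iff₀ hβ).mp hα₁]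
  have hθ₂1 : 1 < θ₂ := by
    rw [hθ₂, lt_div_iff₀ hc₂0]
    linarith [(div_lt_iff₀ hβ).mp hα₂]
  -- rewrite equations: αᵢ = θᵢ * cᵢ / β
  have hA₁ : α₁ = θ₁ * c₁ / β := by field_simp [hθ₁]; rw [hθ₁]; field_simp
  have hA₂ : α₂ = θ₂ * c₂ / β := by field_simp [hθ₂]; rw [hθ₂]; field_simp
  have hf₁ : θ₁ - 1 - Real.log θ₁ = K * β / c₁ := by
    have h := h₁
    rw [hA₁] at h
    field_simp at h ⊢
    nlinarith [h]
  have hf₂ : θ₂ - 1 - Real.log θ₂ = K * β / c₂ := by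
    have h := h₂
    rw [hA₂] at h
    field_simp at h ⊢
    nlinarith [h]
  have hKlt : K * β / c₂ < K * β / c₁ := by
    apply div_lt_div_of_pos_left (by positivity) hc₁0 hc₁₂
  have hθ : θ₂ < θ₁ := by
    by_contra h
    push_neg at h
    rcases eq_or_lt_of_le h with h | h
    · rw [h] at hf₁; rw [hf₁] at hf₂; linarith
    · have := f_strict_mono (le_of_lt hθ₁1) h
      rw [hf₁, hf₂] at this
      linarith
  constructor
  · rw [hA₁, hA₂]
    rw [div_div, div_div, div_lt_div_iff₀ (by positivity) (by positivity)]
    nlinarith [mul_pos (mul_pos (sub_pos.mpr hθ) hc₁0) (mul_pos hβ hc₂0)]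
  · have hl : Real.log θ₂ < Real.log θ₁ :=
      Real.log_lt_log (lt_trans one_pos hθ₂1) hθ
    have : 0 < 1 / β := by positivity
    exact mul_lt_mul_of_pos_left hl this
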